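/- There exists a real constant ξ > 0 with the following property. Let ℓ, u, v be positive integers with u ≤ v ≤ 3 and ℓ ≥ (42v)^v, and let r₁,…,r_u and s₁,…,s_v be positive integers with r₁+⋯+r_u = ℓ, s₁+⋯+s_v = ℓ, and gcd(r₁,…,r_u,s₁,…,s_v) = 1. Set S := Σ_{i=1}^{u} Σ_{j=1}^{v} (r_i + s_j − 2·gcd(r_i,s_j)). Then S ≥ ℓ(v − u + ξ). -/
import Mathlib

private lemma div_bound {d ℓ : ℕ} (m : ℕ) (hd : d ∣ ℓ) (hlt : m * d < ℓ) :
    (m + 1) * d ≤ ℓ := by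
  obtain ⟨k, rfl⟩ := hd
  have hmk : m < k := by
    by_contra hc
    push_neg at hc
    have h2 : d * k ≤ d * m := Nat.mul_le_mul_left d hc
    have h3 : m * d = d * m := Nat.mul_comm m d
    omega
  have h4 : d * (m + 1) ≤ d * k := Nat.mul_le_mul_left d hmk
  have h5 : d * (m + 1) = (m + 1) * d := Nat.mul_comm _ _
  omega

/-- Sorted version of the "three unit fractions below 1 sum to at most 41/42" lemma. -/
private lemma lemV' (ℓ d₁ d₂ d₃ : ℕ) (hℓ : 0 < ℓ)
    (h1 : d₁ = 0 ∨ d₁ ∣ ℓ) (h2 : d₂ = 0 ∨ d₂ ∣ ℓ) (h3 : d₃ = 0 ∨ d₃ ∣ ℓ)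
    (h21 : d₂ ≤ d₁) (h32 : d₃ ≤ d₂) (hlt : d₁ + d₂ + d₃ < ℓ) :
    42 * (d₁ + d₂ + d₃) ≤ 41 * ℓ := by
  rcases h1 with rfl | h1
  · omega
  have hb2 : 2 * d₁ ≤ ℓ := by have := div_bound 1 h1 (by omega); omega
  rcases h2 with rfl | h2
  · omega
  rcases eq_or_lt_of_le hb2 with he2 | hlt2
  · -- ℓ = 2 d₁
    have hd2lt : 2 * d₂ < ℓ := by omega
    have hb3' : 3 * d₂ ≤ ℓ := by have := div_bound 2 h2 (by omega); omega
    rcases eq_or_lt_of_le hb3' with he3 | hlt3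
    · rcases h3 with rfl | h3
      · omega
      have h6 : 6 * d₃ < ℓ := by omega
      have := div_bound 6 h3 (by omega); omega
    · have hb4 : 4 * d₂ ≤ ℓ := by have := div_bound 3 h2 (by omega); omega
      rcases eq_or_lt_of_le hb4 with he4 | hlt4
      · rcases h3 with rfl | h3
        · omega
        have h4 : 4 * d₃ < ℓ := by omega
        have := div_bound 4 h3 (by omega); omega
      · have hb5 : 5 * d₂ ≤ ℓ := by have := div_bound 4 h2 (by omega); omega
        omega
  · -- 2 d₁ < ℓ
    have hb3 : 3 * d₁ ≤ ℓ := by have := div_bound 2 h1 (by omega); omega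
    rcases eq_or_lt_of_le hb3 with he3 | hlt3
    · have hd2 : 2 * d₂ < ℓ := by omega
      have hb3'' : 3 * d₂ ≤ ℓ := by have := div_bound 2 h2 (by omega); omega
      rcases eq_or_lt_of_le hb3'' with he3' | hlt3'
      · rcases h3 with rfl | h3
        · omega
        have h3' : 3 * d₃ < ℓ := by omega
        have := div_bound 3 h3 (by omega); omega
      · have := div_bound 3 h2 (by omega)
        omega
    · have := div_bound 3 h1 (by omega)
      omega

private lemma lemV (ℓ a b c : ℕ) (hℓ : 0 < ℓ)
    (ha : a = 0 ∨ a ∣ ℓ) (hb : b = 0 ∨ b ∣ ℓ) (hc : c = 0 ∨ c ∣ ℓ)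
    (hlt : a + b + c < ℓ) : 42 * (a + b + c) ≤ 41 * ℓ := by
  rcases le_total a b with h1 | h1
  · rcases le_total b c with h2 | h2
    · have := lemV' ℓ c b a hℓ hc hb ha (by omega) (by omega) (by omega); omega
    · rcases le_total a c with h3 | h3
      · have := lemV' ℓ b c a hℓ hb hc ha (by omega) (by omega) (by omega); omega
      · have := lemV' ℓ b a c hℓ hb ha hc (by omega) (by omega) (by omega); omega
  · rcases le_total b c with h2 | h2
    · rcases le_total a c with h3 | h3
      · have := lemV' ℓ c a b hℓ hc ha hb (by omega) (by omega) (by omega); omega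
      · have := lemV' ℓ a c b hℓ ha hc hb (by omega) (by omega) (by omega); omega
    · have := lemV' ℓ a b c hℓ ha hb hc (by omega) (by omega) (by omega); omega

/-- Sorted version: at most three divisors of `ℓ` summing exactly to `ℓ` have a
common divisor `g` with `ℓ ≤ 6 g`. -/
private lemma lemW' (ℓ d₁ d₂ d₃ : ℕ) (hℓ : 0 < ℓ)
    (h1 : d₁ = 0 ∨ d₁ ∣ ℓ) (h2 : d₂ = 0 ∨ d₂ ∣ ℓ) (_h3 : d₃ = 0 ∨ d₃ ∣ ℓ)
    (h21 : d₂ ≤ d₁) (h32 : d₃ ≤ d₂) (heq : d₁ + d₂ + d₃ = ℓ) :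
    ∃ g, g ∣ d₁ ∧ g ∣ d₂ ∧ g ∣ d₃ ∧ ℓ ≤ 6 * g := by
  rcases h1 with rfl | h1
  · exfalso; omega
  by_cases hd1 : d₁ = ℓ
  · have h20 : d₂ = 0 := by omega
    have h30 : d₃ = 0 := by omega
    exact ⟨d₁, dvd_rfl, by simp [h20], by simp [h30], by omega⟩
  · have hb2 : 2 * d₁ ≤ ℓ := by have := div_bound 1 h1 (by omega); omega
    rcases eq_or_lt_of_le hb2 with he2 | hlt2
    · -- ℓ = 2 d₁
      rcases h2 with rfl | h2
      · exfalso; omega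
      by_cases hd2 : d₂ = d₁
      · have h30 : d₃ = 0 := by omega
        exact ⟨d₁, dvd_rfl, by simp [hd2], by simp [h30], by omega⟩
      · have hb3 : 3 * d₂ ≤ ℓ := by have := div_bound 2 h2 (by omega); omega
        rcases eq_or_lt_of_le hb3 with he3 | hlt3
        · exact ⟨d₃, ⟨3, by omega⟩, ⟨2, by omega⟩, dvd_rfl, by omega⟩
        · have hb4 : 4 * d₂ ≤ ℓ := by have := div_bound 3 h2 (by omega); omega
          exact ⟨d₂, ⟨2, by omega⟩, dvd_rfl, ⟨1, by omega⟩, by omega⟩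
    · have hb3 : 3 * d₁ ≤ ℓ := by have := div_bound 2 h1 (by omega); omega
      exact ⟨d₁, dvd_rfl, ⟨1, by omega⟩, ⟨1, by omega⟩, by omega⟩

private lemma lemW (ℓ a b c : ℕ) (hℓ : 0 < ℓ)
    (ha : a = 0 ∨ a ∣ ℓ) (hb : b = 0 ∨ b ∣ ℓ) (hc : c = 0 ∨ c ∣ ℓ)
    (heq : a + b + c = ℓ) : ∃ g, g ∣ a ∧ g ∣ b ∧ g ∣ c ∧ ℓ ≤ 6 * g := by
  rcases le_total a b with h1 | h1
  · rcases le_total b c with h2 | h2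
    · obtain ⟨g, g1, g2, g3, h6⟩ := lemW' ℓ c b a hℓ hc hb ha (by omega) (by omega) (by omega)
      exact ⟨g, g3, g2, g1, h6⟩
    · rcases le_total a c with h3 | h3
      · obtain ⟨g, g1, g2, g3, h6⟩ := lemW' ℓ b c a hℓ hb hc ha (by omega) (by omega) (by omega)
        exact ⟨g, g3, g1, g2, h6⟩
      · obtain ⟨g, g1, g2, g3, h6⟩ := lemW' ℓ b a c hℓ hb ha hc (by omega) (by omega) (by omega)
        exact ⟨g, g2, g1, g3, h6⟩
  · rcases le_total b c with h2 | h2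
    · rcases le_total a c with h3 | h3
      · obtain ⟨g, g1, g2, g3, h6⟩ := lemW' ℓ c a b hℓ hc ha hb (by omega) (by omega) (by omega)
        exact ⟨g, g2, g3, g1, h6⟩
      · obtain ⟨g, g1, g2, g3, h6⟩ := lemW' ℓ a c b hℓ ha hc hb (by omega) (by omega) (by omega)
        exact ⟨g, g1, g3, g2, h6⟩
    · obtain ⟨g, g1, g2, g3, h6⟩ := lemW' ℓ a b c hℓ ha hb hc (by omega) (by omega) (by omega)
      exact ⟨g, g1, g2, g3, h6⟩


/-- **Lemma 2.13(2)**: there is an absolute constant `ξ > 0` such that, whenever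
`u ≤ v ≤ 3`, `ℓ ≥ (42v)^v`, the positive integers `r₁,…,r_u` and `s₁,…,s_v` each sum
to `ℓ`, and the gcd of all of `r₁,…,r_u,s₁,…,s_v` is `1`, the sum
`S := Σᵢ Σⱼ (rᵢ + sⱼ − 2·gcd(rᵢ,sⱼ))` satisfies `S ≥ ℓ(v − u + ξ)`. -/
theorem statement6 :
    ∃ ξ : ℝ, 0 < ξ ∧
      ∀ (ℓ u v : ℕ) (r : Fin u → ℕ) (s : Fin v → ℕ),
        0 < u → 0 < v → u ≤ v → v ≤ 3 → (42 * v) ^ v ≤ ℓ →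
        (∀ i, 0 < r i) → (∀ j, 0 < s j) →
        (∑ i, r i = ℓ) → (∑ j, s j = ℓ) →
        Nat.gcd (Finset.univ.gcd r) (Finset.univ.gcd s) = 1 →
        (ℓ : ℝ) * ((v : ℝ) - (u : ℝ) + ξ) ≤
          ∑ i, ∑ j, ((r i : ℝ) + (s j : ℝ) - 2 * (Nat.gcd (r i) (s j) : ℝ)) := by
  refine ⟨1/126, by norm_num, ?_⟩
  intro ℓ u v r s hu hv huv hv3 hℓ hr hs hrsum hssum hgcd
  obtain ⟨T, hT⟩ : ∃ T, T = ∑ i, ∑ j, Nat.gcd (r i) (s j) := ⟨_, rfl⟩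
  have hℓpos : 0 < ℓ := lt_of_lt_of_le (pow_pos (by omega) v) hℓ
  have h42 : 42 ≤ ℓ := by
    have h1 : 42 ≤ 42 * v := Nat.le_mul_of_pos_right 42 hv
    have h2 : (42 * v) ^ 1 ≤ (42 * v) ^ v := Nat.pow_le_pow_right (by omega) hv
    have h3 : (42 * v) ^ 1 = 42 * v := pow_one _
    omega
  -- main natural-number claim
  have hnat : 252 * T + ℓ ≤ 252 * (u * ℓ) := by
    by_contra hcon
    push_neg at hcon
    -- every s j is either light or divides every r i
    have hpair : ∀ j : Fin v, 126 * s j < ℓ ∨ ∀ i : Fin u, s j ∣ r i := by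
      intro j
      by_contra hcc
      push_neg at hcc
      obtain ⟨hheavy, i, hndvd⟩ := hcc
      have hg2 : 2 * Nat.gcd (r i) (s j) ≤ s j := by
        obtain ⟨c, hc'⟩ := Nat.gcd_dvd_right (r i) (s j)
        have hc0 : c ≠ 0 := by
          rintro rfl
          rw [mul_zero] at hc'
          have := hs j
          omega
        have hc1 : c ≠ 1 := by
          rintro rfl
          rw [mul_one] at hc'
          exact hndvd (by rw [hc']; exact Nat.gcd_dvd_left _ _)
        have h2 : Nat.gcd (r i) (s j) * 2 ≤ Nat.gcd (r i) (s j) * c :=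
          Nat.mul_le_mul_left _ (by omega)
        omega
      have hrow : ∀ i' : Fin u, (∑ j', Nat.gcd (r i') (s j')) ≤ ℓ := by
        intro i'
        calc (∑ j', Nat.gcd (r i') (s j')) ≤ ∑ j', s j' :=
              Finset.sum_le_sum fun j' _ => Nat.gcd_le_right _ (hs j')
          _ = ℓ := hssum
      have hrowi : (∑ j', Nat.gcd (r i) (s j')) + s j ≤ ℓ + Nat.gcd (r i) (s j) := by
        have hA : Nat.gcd (r i) (s j) + ∑ j' ∈ Finset.univ.erase j, Nat.gcd (r i) (s j')
            = ∑ j', Nat.gcd (r i) (s j') := by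
          rw [Finset.add_sum_erase Finset.univ (fun j' => Nat.gcd (r i) (s j'))
            (Finset.mem_univ j)]
        have hB : (∑ j' ∈ Finset.univ.erase j, Nat.gcd (r i) (s j'))
            ≤ ∑ j' ∈ Finset.univ.erase j, s j' :=
          Finset.sum_le_sum fun j' _ => Nat.gcd_le_right _ (hs j')
        have hC : s j + ∑ j' ∈ Finset.univ.erase j, s j' = ℓ := by
          rw [Finset.add_sum_erase Finset.univ s (Finset.mem_univ j)]
          exact hssum
        omega
      have hsplit : T = (∑ j', Nat.gcd (r i) (s j'))
          + ∑ i' ∈ Finset.univ.erase i, ∑ j', Nat.gcd (r i') (s j') := by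
        rw [hT, Finset.add_sum_erase Finset.univ (fun i' => ∑ j', Nat.gcd (r i') (s j'))
          (Finset.mem_univ i)]
      have hrest : (∑ i' ∈ Finset.univ.erase i, ∑ j', Nat.gcd (r i') (s j')) ≤ (u - 1) * ℓ := by
        calc (∑ i' ∈ Finset.univ.erase i, ∑ j', Nat.gcd (r i') (s j'))
            ≤ ∑ _i' ∈ Finset.univ.erase i, ℓ := Finset.sum_le_sum fun i' _ => hrow i'
          _ = (u - 1) * ℓ := by
              rw [Finset.sum_const, smul_eq_mul, Finset.card_erase_of_mem (Finset.mem_univ i),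
                Finset.card_univ, Fintype.card_fin]
      have hu1 : 1 * ℓ ≤ u * ℓ := Nat.mul_le_mul_right ℓ hu
      have hu2 : (u - 1) * ℓ = u * ℓ - 1 * ℓ := by rw [Nat.sub_mul]
      omega
    -- heavy s's divide ℓ
    have hdvdl : ∀ j : Fin v, (∀ i, s j ∣ r i) → s j ∣ ℓ := by
      intro j h
      rw [← hrsum]
      exact Finset.dvd_sum fun i _ => h i
    -- if all s's divide all r's then gcd of s's is 1
    have hG1 : (∀ j : Fin v, ∀ i : Fin u, s j ∣ r i) → Finset.univ.gcd s = 1 := by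
      intro h
      have hGdvd : Finset.univ.gcd s ∣ Finset.univ.gcd r :=
        Finset.dvd_gcd fun i _ =>
          (Finset.gcd_dvd (Finset.mem_univ (⟨0, hv⟩ : Fin v))).trans (h ⟨0, hv⟩ i)
      rw [← hgcd]
      exact (Nat.gcd_eq_right hGdvd).symm
    have hfinish : ∀ g : ℕ, (∀ j : Fin v, g ∣ s j) → (∀ j : Fin v, ∀ i : Fin u, s j ∣ r i)
        → ℓ ≤ 6 * g → False := by
      intro g hgs hall h6
      have h1 := hG1 hall
      have h2 : g ∣ 1 := h1 ▸ Finset.dvd_gcd fun j _ => hgs j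
      have h3 : g = 1 := Nat.dvd_one.mp h2
      omega
    interval_cases v
    · -- v = 1
      have h0s : s 0 = ℓ := by simpa using hssum
      rcases hpair 0 with h0 | h0
      · omega
      · obtain ⟨g, hg0, -, -, h6g⟩ := lemW ℓ (s 0) 0 0 hℓpos (Or.inr (hdvdl 0 h0))
          (Or.inl rfl) (Or.inl rfl) (by omega)
        exact hfinish g (fun j => by fin_cases j <;> exact hg0)
          (fun j => by fin_cases j <;> exact h0) h6g
    · -- v = 2
      have h01 : s 0 + s 1 = ℓ := by
        have := hssum
        rw [Fin.sum_univ_two] at this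
        exact this
      norm_num at hℓ
      rcases hpair 0 with h0 | h0 <;> rcases hpair 1 with h1 | h1
      · omega
      · have hd1 := hdvdl 1 h1
        have := div_bound 1 hd1 (by have := hs 0; omega)
        omega
      · have hd0 := hdvdl 0 h0
        have := div_bound 1 hd0 (by have := hs 1; omega)
        omega
      · obtain ⟨g, hg0, hg1, -, h6g⟩ := lemW ℓ (s 0) (s 1) 0 hℓpos
          (Or.inr (hdvdl 0 h0)) (Or.inr (hdvdl 1 h1)) (Or.inl rfl) (by omega)
        exact hfinish g (fun j => by fin_cases j <;> [exact hg0; exact hg1])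
          (fun j => by fin_cases j <;> [exact h0; exact h1]) h6g
    · -- v = 3
      have h012 : s 0 + s 1 + s 2 = ℓ := by
        have := hssum
        rw [Fin.sum_univ_three] at this
        exact this
      norm_num at hℓ
      rcases hpair 0 with h0 | h0 <;> rcases hpair 1 with h1 | h1 <;> rcases hpair 2 with h2 | h2
      · omega
      · -- only s2 heavy
        have := div_bound 1 (hdvdl 2 h2) (by have := hs 0; have := hs 1; omega)
        omega
      · have := div_bound 1 (hdvdl 1 h1) (by have := hs 0; have := hs 2; omega)
        omega
      · -- s1, s2 heavy, s0 light
        have hV := lemV ℓ (s 1) (s 2) 0 hℓpos (Or.inr (hdvdl 1 h1)) (Or.inr (hdvdl 2 h2))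
          (Or.inl rfl) (by have := hs 0; omega)
        omega
      · have := div_bound 1 (hdvdl 0 h0) (by have := hs 1; have := hs 2; omega)
        omega
      · have hV := lemV ℓ (s 0) (s 2) 0 hℓpos (Or.inr (hdvdl 0 h0)) (Or.inr (hdvdl 2 h2))
          (Or.inl rfl) (by have := hs 1; omega)
        omega
      · have hV := lemV ℓ (s 0) (s 1) 0 hℓpos (Or.inr (hdvdl 0 h0)) (Or.inr (hdvdl 1 h1))
          (Or.inl rfl) (by have := hs 2; omega)
        omega
      · obtain ⟨g, hg0, hg1, hg2', h6g⟩ := lemW ℓ (s 0) (s 1) (s 2) hℓpos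
          (Or.inr (hdvdl 0 h0)) (Or.inr (hdvdl 1 h1)) (Or.inr (hdvdl 2 h2)) h012
        exact hfinish g (fun j => by fin_cases j <;> [exact hg0; exact hg1; exact hg2'])
          (fun j => by fin_cases j <;> [exact h0; exact h1; exact h2]) h6g
  -- convert to the real inequality
  have hr' : (∑ i, (r i : ℝ)) = (ℓ : ℝ) := by exact_mod_cast hrsum
  have hs' : (∑ j, (s j : ℝ)) = (ℓ : ℝ) := by exact_mod_cast hssum
  have hsum_eq : (∑ i, ∑ j, ((r i : ℝ) + (s j : ℝ) - 2 * (Nat.gcd (r i) (s j) : ℝ)))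
      = (u : ℝ) * ℓ + (v : ℝ) * ℓ - 2 * (T : ℝ) := by
    have hTc : (T : ℝ) = ∑ i, ∑ j, (Nat.gcd (r i) (s j) : ℝ) := by
      rw [hT]; push_cast; ring
    simp only [Finset.sum_sub_distrib, Finset.sum_add_distrib, Finset.sum_const,
      Finset.card_univ, Fintype.card_fin, nsmul_eq_mul, ← Finset.mul_sum]
    rw [hr', hs', hTc]
    ring
  rw [hsum_eq]
  have hcast : (252 : ℝ) * T + ℓ ≤ 252 * (u * ℓ) := by exact_mod_cast hnat
  nlinarith [hcast]
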